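/- arXiv:2208.10556 — 2 statements merged into one kernel-verified Lean document; each statement's English description precedes it below -/
import Mathlib

section
/- Let G be a group containing no element of order 2, and let σ : ℤ[G] → ℤ[G] be the ℤ-linear involution determined by σ(g) = g⁻¹ for g ∈ G. Then the quotient group ker(1 − σ)/im(1 + σ) is cyclic of order 2, generated by the class of the identity element e ∈ G. -/
/-- Let `G` be a group with no element of order 2 and `σ` the additive involution of
`ℤ[G]` with `σ(g) = g⁻¹`. Then `ker(1 − σ)/im(1 + σ)` is cyclic of order 2,
generated by the class of the identity element `e ∈ G`: every `σ`-fixed element is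
`n·[e]` plus an element of `im(1+σ)`, `2·[e] ∈ im(1+σ)`, and `[e] ∉ im(1+σ)`. -/
theorem tate_zero_group_ring (G : Type*) [Group G]
    (hG : ∀ g : G, g * g = 1 → g = 1)
    (σ : MonoidAlgebra ℤ G →+ MonoidAlgebra ℤ G)
    (hσ : ∀ g : G, σ (MonoidAlgebra.single g 1) = MonoidAlgebra.single g⁻¹ 1) :
    (∀ x : MonoidAlgebra ℤ G, σ x = x →
        ∃ (n : ℤ) (y : MonoidAlgebra ℤ G),
          x = n • MonoidAlgebra.single (1 : G) (1 : ℤ) + (y + σ y)) ∧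
    (∃ y : MonoidAlgebra ℤ G,
        MonoidAlgebra.single (1 : G) (1 : ℤ) + MonoidAlgebra.single (1 : G) (1 : ℤ)
          = y + σ y) ∧
    (¬ ∃ y : MonoidAlgebra ℤ G, MonoidAlgebra.single (1 : G) (1 : ℤ) = y + σ y) := by
  classical
  have addapp : ∀ (a b : MonoidAlgebra ℤ G) (h : G), (a + b).coeff h = a.coeff h + b.coeff h :=
    fun a b h => Finsupp.add_apply a.coeff b.coeff h
  have sapp : ∀ (g h : G) (n : ℤ),
      (MonoidAlgebra.single g n : MonoidAlgebra ℤ G).coeff h = if g = h then n else 0 :=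
    fun g h n => Finsupp.single_apply
  have smulapp : ∀ (n : ℤ) (a : MonoidAlgebra ℤ G) (h : G), (n • a).coeff h = n * a.coeff h :=
    fun n a h => rfl
  have extfun : ∀ (a b : MonoidAlgebra ℤ G), (∀ h, a.coeff h = b.coeff h) → a = b :=
    fun a b hab => MonoidAlgebra.ext (Finsupp.ext hab)
  have hsingle : ∀ (g : G) (n : ℤ),
      σ (MonoidAlgebra.single g n) = MonoidAlgebra.single g⁻¹ n := by
    intro g n
    have h1 : (MonoidAlgebra.single g n : MonoidAlgebra ℤ G)
        = n • MonoidAlgebra.single g 1 := by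
      simp [MonoidAlgebra.smul_single']
    rw [h1, map_zsmul, hσ]
    simp [MonoidAlgebra.smul_single']
  have hσapp : ∀ (x : MonoidAlgebra ℤ G) (h : G), (σ x).coeff h = x.coeff h⁻¹ := by
    intro x
    induction x using MonoidAlgebra.induction with
    | zero => simp
    | single_add g n f _ _ ih =>
      intro h
      have h3 : σ (MonoidAlgebra.single g n + f) = σ (MonoidAlgebra.single g n) + σ f := map_add σ _ _
      rw [h3]
      have h2 : σ (MonoidAlgebra.single g n) = MonoidAlgebra.single g⁻¹ n := hsingle g n
      rw [h2]
      rw [addapp, ih, addapp, sapp, sapp]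
      congr 1
      simp [inv_eq_iff_eq_inv]
  refine ⟨?_, ⟨MonoidAlgebra.single 1 1, by rw [hσ]; simp⟩, ?_⟩
  · intro x hx
    have hfix : ∀ g : G, x.coeff g⁻¹ = x.coeff g := by
      intro g
      conv_rhs => rw [← hx]
      rw [hσapp]
    letI : LinearOrder G := linearOrderOfSTO WellOrderingRel
    refine ⟨x.coeff 1, MonoidAlgebra.ofCoeff (x.coeff.filter (fun g => g < g⁻¹)), ?_⟩
    apply extfun
    intro h
    rw [addapp, addapp, smulapp, sapp, hσapp]
    have fapp : ∀ h' : G, (MonoidAlgebra.ofCoeff (x.coeff.filter (fun g => g < g⁻¹)) : MonoidAlgebra ℤ G).coeff h'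
        = if h' < h'⁻¹ then x.coeff h' else 0 := fun h' => Finsupp.filter_apply _ _ _
    rw [fapp, fapp, inv_inv]
    by_cases h1 : h = 1
    · subst h1
      simp
    · have hne : h ≠ h⁻¹ := by
        intro he
        apply h1
        apply hG
        nth_rewrite 2 [he]
        simp
      rcases lt_trichotomy h h⁻¹ with hc | hc | hc
      · simp [hc, asymm hc, Ne.symm h1]
      · exact absurd hc hne
      · simp [hc, asymm hc, Ne.symm h1, hfix]
  · rintro ⟨y, hy⟩
    have h2 := congrArg (fun f : MonoidAlgebra ℤ G => f.coeff 1) hy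
    simp only [addapp, hσapp, inv_one, sapp] at h2
    simp only [if_true] at h2
    omega
end

section
/- For every integer k ≥ 1, the formal group laws F(x,y) = x + y + 2xy and G(x,y) = x + y + 2^k·xy over ℤ are strictly isomorphic: there exists a power series f ∈ ℤ[[X]] with f(0) = 0 and linear coefficient 1 such that f(F(x,y)) = G(f(x), f(y)) in ℤ[[x,y]]. -/
/-- Substitution of a one-variable power series `f` into a polynomial `p` in two
variables with zero constant coefficient, producing a power series in two
variables: the coefficient of the monomial `d` is `∑_{k ≤ |d|} f_k · coeff d (p^k)`. -/
noncomputable def substTwoZ (f : PowerSeries ℤ) (p : MvPolynomial (Fin 2) ℤ) :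
    MvPowerSeries (Fin 2) ℤ :=
  fun d => ∑ k ∈ Finset.range (d 0 + d 1 + 1),
    PowerSeries.coeff k f * MvPolynomial.coeff d (p ^ k)


open Finset

-- coeff of p^j vanishes below degree j when constant coeff is 0
lemma coeff_pow_zero_of_lt {p : MvPolynomial (Fin 2) ℤ}
    (hp : MvPolynomial.constantCoeff p = 0) :
    ∀ (j : ℕ) (d : Fin 2 →₀ ℕ), d 0 + d 1 < j → MvPolynomial.coeff d (p ^ j) = 0 := by
  intro j
  induction j with
  | zero => intro d hd; omega
  | succ j ih =>
    intro d hd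
    rw [pow_succ, mul_comm, MvPolynomial.coeff_mul]
    apply Finset.sum_eq_zero
    rintro ⟨a, b⟩ hab
    rw [Finset.HasAntidiagonal.mem_antidiagonal] at hab
    have h0 : a 0 + b 0 = d 0 := by rw [← hab]; simp
    have h1 : a 1 + b 1 = d 1 := by rw [← hab]; simp
    by_cases hb : b 0 + b 1 < j
    · simp [ih b hb]
    · have ha0 : a 0 = 0 := by omega
      have ha1 : a 1 = 0 := by omega
      have : a = 0 := by
        ext i; fin_cases i <;> assumption
      subst this
      have : MvPolynomial.coeff (0 : Fin 2 →₀ ℕ) p = 0 := by rw [MvPolynomial.constantCoeff_eq] at hp; exact hp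
      simp [this]


lemma substTwoZ_smul (a : ℤ) (f : PowerSeries ℤ) (p : MvPolynomial (Fin 2) ℤ) :
    substTwoZ (a • f) p = a • substTwoZ f p := by
  funext d
  show ∑ j ∈ Finset.range _, _ = a * ∑ j ∈ Finset.range _, _
  rw [Finset.mul_sum]
  apply Finset.sum_congr rfl
  intro j _
  rw [map_smul, smul_eq_mul, mul_assoc]

lemma substTwoZ_poly (q : Polynomial ℤ) (p : MvPolynomial (Fin 2) ℤ)
    (hp : MvPolynomial.constantCoeff p = 0) :
    substTwoZ (q : PowerSeries ℤ) p
      = ((Polynomial.aeval p q : MvPolynomial (Fin 2) ℤ) : MvPowerSeries (Fin 2) ℤ) := by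
  funext d
  set N := max (d 0 + d 1 + 1) (q.natDegree + 1) with hN
  have hd : d 0 + d 1 + 1 ≤ N := le_max_left _ _
  have hq : q.natDegree < N := lt_of_lt_of_le (Nat.lt_succ_self _) (le_max_right _ _)
  show (∑ j ∈ Finset.range (d 0 + d 1 + 1),
      PowerSeries.coeff j (q : PowerSeries ℤ) * MvPolynomial.coeff d (p ^ j)) = _
  have lhs_eq : (∑ j ∈ Finset.range (d 0 + d 1 + 1),
      PowerSeries.coeff j (q : PowerSeries ℤ) * MvPolynomial.coeff d (p ^ j))
      = ∑ j ∈ Finset.range N, q.coeff j * MvPolynomial.coeff d (p ^ j) := by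
    rw [Finset.sum_subset (Finset.range_subset_range.2 hd)]
    · apply Finset.sum_congr rfl
      intro j _
      rw [Polynomial.coeff_coe]
    · intro j _ hj
      rw [Finset.mem_range, not_lt] at hj
      rw [coeff_pow_zero_of_lt hp j d (by omega), mul_zero]
  rw [lhs_eq]
  have hcoe : ((Polynomial.aeval p q : MvPolynomial (Fin 2) ℤ) :
      MvPowerSeries (Fin 2) ℤ) d = MvPolynomial.coeff d (Polynomial.aeval p q) :=
    MvPolynomial.coeff_coe _ d
  rw [hcoe, Polynomial.aeval_eq_sum_range' hq]
  rw [MvPolynomial.coeff_sum]  -- maybe name differs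
  apply Finset.sum_congr rfl
  intro j _
  rw [MvPolynomial.coeff_smul, smul_eq_mul]

lemma coeff_Q (m n : ℕ) :
    ((2 * Polynomial.X + 1 : Polynomial ℤ) ^ m).coeff n = 2 ^ n * (m.choose n : ℤ) := by
  rw [add_pow]
  simp only [one_pow, mul_one, Polynomial.finset_sum_coeff, mul_pow]
  have : ∀ i ∈ Finset.range (m + 1),
      ((2:Polynomial ℤ) ^ i * Polynomial.X ^ i * (m.choose i : Polynomial ℤ)).coeff n
      = if i = n then 2 ^ n * (m.choose n : ℤ) else 0 := by
    intro i _
    have h2 : (2 : Polynomial ℤ) ^ i = Polynomial.C ((2:ℤ) ^ i) := by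
      rw [map_pow, map_ofNat]
    have hc : ((m.choose i : ℕ) : Polynomial ℤ) = Polynomial.C ((m.choose i : ℤ)) := by
      exact (Polynomial.C_eq_natCast _).symm
    rw [h2, hc, mul_comm (Polynomial.C ((2:ℤ)^i) * Polynomial.X ^ i), ← mul_assoc,
      ← map_mul, Polynomial.coeff_C_mul, Polynomial.coeff_X_pow]
    by_cases hin : i = n
    · subst hin; simp [mul_comm]
    · simp [hin]
      exact fun h => absurd h.symm hin
  rw [Finset.sum_congr rfl this, Finset.sum_ite_eq' (Finset.range (m + 1)) n]
  by_cases hn : n ∈ Finset.range (m + 1)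
  · simp [hn]
  · rw [if_neg hn]
    rw [Finset.mem_range, not_lt] at hn
    rw [Nat.choose_eq_zero_of_lt (by omega)]
    simp

lemma dvd_key (k n : ℕ) (hk : 1 ≤ k) (hn : 1 ≤ n) :
    (2:ℕ) ^ k ∣ 2 ^ n * (2 ^ (k-1)).choose n := by
  set m := 2 ^ (k-1) with hm
  by_cases hkn : k ≤ n
  · exact Dvd.dvd.mul_right (pow_dvd_pow 2 hkn) _
  · push_neg at hkn
    have hnm : n ≤ m := by
      have h1 : k - 1 < 2 ^ (k-1) := Nat.lt_two_pow_self
      omega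
    have hC : m.choose n ≠ 0 := (Nat.choose_pos hnm).ne'
    -- key identity : m * choose (m-1) (n-1) = choose m n * n
    have hid : m * (m-1).choose (n-1) = m.choose n * n := by
      have := Nat.add_one_mul_choose_eq (m-1) (n-1)
      have hm1 : m - 1 + 1 = m := Nat.sub_add_cancel (Nat.pow_pos (by norm_num))
      have hn1 : n - 1 + 1 = n := Nat.sub_add_cancel hn
      rwa [hm1, hn1] at this
    have hdvd : 2 ^ (k-1) ∣ m.choose n * n := ⟨(m-1).choose (n-1), hid.symm⟩
    have hfac : k - 1 ≤ (m.choose n).factorization 2 + n.factorization 2 := by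
      have := (Nat.Prime.pow_dvd_iff_le_factorization Nat.prime_two
        (mul_ne_zero hC (by omega))).1 hdvd
      rwa [Nat.factorization_mul hC (by omega), Finsupp.add_apply] at this
    have hvn : n.factorization 2 ≤ n - 1 := by
      have h1 : 2 ^ (n.factorization 2) ∣ n := Nat.ordProj_dvd n 2
      have h2 : 2 ^ (n.factorization 2) ≤ n := Nat.le_of_dvd (by omega) h1
      have h3 : n.factorization 2 < 2 ^ (n.factorization 2) := Nat.lt_two_pow_self
      omega
    have hvC : k - n ≤ (m.choose n).factorization 2 := by omega
    have : 2 ^ (k - n) ∣ m.choose n :=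
      (Nat.Prime.pow_dvd_iff_le_factorization Nat.prime_two hC).2 hvC
    calc (2:ℕ) ^ k = 2 ^ n * 2 ^ (k - n) := by rw [← pow_add]; congr 1; omega
    _ ∣ 2 ^ n * m.choose n := mul_dvd_mul_left _ this


/-- For every `k ≥ 1`, the formal group laws `x + y + 2xy` and `x + y + 2^k·xy`
over `ℤ` are strictly isomorphic: there is `f ∈ ℤ[[X]]` with `f(0) = 0` and linear
coefficient `1` such that `f(x + y + 2xy) = f(x) + f(y) + 2^k·f(x)·f(y)`. -/
theorem fgl_two_iso_two_pow (k : ℕ) (hk : 1 ≤ k) :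
    ∃ f : PowerSeries ℤ,
      PowerSeries.constantCoeff f = 0 ∧
      PowerSeries.coeff 1 f = 1 ∧
      (let x : MvPolynomial (Fin 2) ℤ := MvPolynomial.X 0
       let y : MvPolynomial (Fin 2) ℤ := MvPolynomial.X 1
       substTwoZ f (x + y + 2 * x * y)
         = substTwoZ f x + substTwoZ f y + 2 ^ k * (substTwoZ f x * substTwoZ f y)) := by
  set m := 2 ^ (k - 1) with hm
  set Q : Polynomial ℤ := (2 * Polynomial.X + 1) ^ m with hQ
  set P : Polynomial ℤ := Q - 1 with hP
  set c : ℤ := 2 ^ k with hc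
  have hc0 : c ≠ 0 := by positivity
  have hP0 : P.coeff 0 = 0 := by
    rw [hP, Polynomial.coeff_sub, hQ, coeff_Q, Polynomial.coeff_one]
    simp
  have hP1 : P.coeff 1 = c := by
    rw [hP, Polynomial.coeff_sub, hQ, coeff_Q, Polynomial.coeff_one]
    have : ((m : ℕ).choose 1 : ℤ) = 2 ^ (k - 1) := by
      rw [Nat.choose_one_right, hm]; push_cast; ring
    rw [this]
    have : (2:ℤ) ^ 1 * 2 ^ (k - 1) = 2 ^ k := by
      rw [← pow_add]; congr 1; omega
    rw [this, hc]; simp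
  have hdvd : ∀ n, c ∣ P.coeff n := by
    intro n
    match n with
    | 0 => rw [hP0]; exact dvd_zero c
    | (n+1) =>
      have h1 : P.coeff (n+1) = 2 ^ (n+1) * (m.choose (n+1) : ℤ) := by
        rw [hP, Polynomial.coeff_sub, hQ, coeff_Q, Polynomial.coeff_one]
        simp
      have h2 := dvd_key k (n+1) hk (by omega)
      rw [h1, hc]
      exact_mod_cast h2
  set f : PowerSeries ℤ := PowerSeries.mk fun n => P.coeff n / c with hfdef
  have hf : c • f = (P : PowerSeries ℤ) := by
    apply PowerSeries.ext
    intro n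
    rw [map_smul, smul_eq_mul, Polynomial.coeff_coe, hfdef, PowerSeries.coeff_mk]
    exact Int.mul_ediv_cancel' (hdvd n)
  refine ⟨f, ?_, ?_, ?_⟩
  · rw [hfdef, PowerSeries.constantCoeff_mk, hP0]
    simp
  · rw [hfdef, PowerSeries.coeff_mk, hP1]
    exact Int.ediv_self hc0
  · intro x y
    have hxd : x = MvPolynomial.X 0 := rfl
    have hyd : y = MvPolynomial.X 1 := rfl
    set F : MvPolynomial (Fin 2) ℤ := x + y + 2 * x * y with hF
    have hxc : MvPolynomial.constantCoeff x = 0 := by rw [hxd]; simp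
    have hyc : MvPolynomial.constantCoeff y = 0 := by rw [hyd]; simp
    have hFc : MvPolynomial.constantCoeff F = 0 := by
      rw [hF]; simp only [map_add, map_mul, hxc, hyc]; ring
    have hinj : ∀ A B : MvPowerSeries (Fin 2) ℤ, c • A = c • B → A = B := by
      intro A B h
      apply MvPowerSeries.ext
      intro d
      have := congrArg (MvPowerSeries.coeff d) h
      rw [map_smul, map_smul, smul_eq_mul, smul_eq_mul] at this
      exact mul_left_cancel₀ hc0 this
    have h1 : c • substTwoZ f F = ↑(Polynomial.aeval F P) := by
      rw [← substTwoZ_smul, hf, substTwoZ_poly _ _ hFc]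
    have h2 : c • substTwoZ f x = ↑(Polynomial.aeval x P) := by
      rw [← substTwoZ_smul, hf, substTwoZ_poly _ _ hxc]
    have h3 : c • substTwoZ f y = ↑(Polynomial.aeval y P) := by
      rw [← substTwoZ_smul, hf, substTwoZ_poly _ _ hyc]
    have hmul : (2 ^ k : MvPowerSeries (Fin 2) ℤ) * (substTwoZ f x * substTwoZ f y)
        = c • (substTwoZ f x * substTwoZ f y) := by
      rw [hc, zsmul_eq_mul]
      push_cast
      ring
    apply hinj; apply hinj
    rw [hmul, smul_add, smul_add, smul_add, smul_add, h1, h2, h3]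
    have hprod : c • (c • (c • (substTwoZ f x * substTwoZ f y)))
        = c • ((c • substTwoZ f x) * (c • substTwoZ f y)) := by
      rw [smul_mul_smul_comm, smul_smul, smul_smul, smul_smul]
      congr 1
      ring
    have hQF : Polynomial.aeval F Q = Polynomial.aeval x Q * Polynomial.aeval y Q := by
      rw [hQ, map_pow, map_pow, map_pow, ← mul_pow]
      congr 1
      rw [map_add, map_mul, map_ofNat, Polynomial.aeval_X, map_one,
        map_add, map_mul, map_ofNat, Polynomial.aeval_X, map_one,
        map_add, map_mul, map_ofNat, Polynomial.aeval_X, map_one, hF]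
      ring
    have hpoly : Polynomial.aeval F P = Polynomial.aeval x P + Polynomial.aeval y P
        + Polynomial.aeval x P * Polynomial.aeval y P := by
      rw [hP]; simp only [map_sub, map_one, hQF]; ring
    rw [hprod, h2, h3, ← smul_add, ← smul_add, hpoly,
      MvPolynomial.coe_add, MvPolynomial.coe_add, MvPolynomial.coe_mul]
end
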